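/- arXiv:2406.04141 — 2 statements merged into one kernel-verified Lean document; each statement's English description precedes it below -/
import Mathlib

section
/- For the Coupon Collector Channel CC(n,k,R) with uniform input, the mutual information I(X;Y) equals log₂ C(n,k) − k^{-R} · Σ_{ℓ=1}^{min(k,R)} C(k,ℓ) · S(R,ℓ) · ℓ! · log₂ C(n-ℓ, k-ℓ). -/
/-- Stirling numbers of the second kind. -/
def stirling2 : ℕ → ℕ → ℕ
  | 0, 0 => 0 + 1
  | 0, _ + 1 => 0
  | _ + 1, 0 => 0
  | n + 1, k + 1 => (k + 1) * stirling2 n (k + 1) + stirling2 n k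

lemma stirling2_eq_zero : ∀ {R ℓ : ℕ}, R < ℓ → stirling2 R ℓ = 0
  | 0, _ + 1, _ => rfl
  | R + 1, ℓ + 1, h => by
    rw [stirling2, stirling2_eq_zero (by omega), stirling2_eq_zero (by omega)]; ring

lemma stirling2_zero_right {R : ℕ} (h : 0 < R) : stirling2 R 0 = 0 := by
  obtain ⟨m, rfl⟩ := Nat.exists_eq_succ_of_ne_zero h.ne'
  rfl

lemma image_cons {n R : ℕ} (v : Fin n) (g : Fin R → Fin n) :
    Finset.image (Fin.cons v g : Fin (R+1) → Fin n) Finset.univ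
      = insert v (Finset.image g Finset.univ) := by
  ext a; simp [Fin.exists_fin_succ, eq_comm]

lemma sum_image_card (n : ℕ) : ∀ (R : ℕ) (F : ℕ → ℝ),
    ∑ y : Fin R → Fin n, F ((Finset.image y Finset.univ).card)
      = ∑ ℓ ∈ Finset.range (R+1),
          (n.choose ℓ * ℓ.factorial * stirling2 R ℓ : ℝ) * F ℓ
  | 0, F => by
    simp [stirling2]
  | R + 1, F => by
    rw [← (Fin.consEquiv (fun _ : Fin (R+1) => Fin n)).sum_comp
        (fun y => F ((Finset.image y Finset.univ).card))]
    rw [Fintype.sum_prod_type]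
    have step : ∀ (v : Fin n) (g : Fin R → Fin n),
        F ((Finset.image ((Fin.consEquiv (fun _ : Fin (R+1) => Fin n)) (v, g))
            Finset.univ).card)
          = F ((insert v (Finset.image g Finset.univ)).card) := by
      intro v g
      congr 2
      exact image_cons v g
    simp_rw [step]
    rw [Finset.sum_comm]
    have inner : ∀ g : Fin R → Fin n,
        (∑ v : Fin n, F ((insert v (Finset.image g Finset.univ)).card))
          = (fun ℓ : ℕ => (ℓ : ℝ) * F ℓ + ((n - ℓ : ℕ) : ℝ) * F (ℓ + 1))
              ((Finset.image g Finset.univ).card) := by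
      intro g
      set s := Finset.image g Finset.univ with hs
      have : ∀ v : Fin n, F ((insert v s).card)
          = if v ∈ s then F s.card else F (s.card + 1) := by
        intro v
        by_cases hv : v ∈ s
        · simp [hv, Finset.insert_eq_self.2 hv]
        · simp [hv, Finset.card_insert_of_notMem hv]
      simp_rw [this]
      rw [Finset.sum_ite, Finset.sum_const, Finset.sum_const]
      have h1 : Finset.univ.filter (fun v => v ∈ s) = s := by simp
      rw [Finset.filter_not, h1, Finset.card_sdiff_of_subset (Finset.subset_univ s),
        Finset.card_univ, Fintype.card_fin]
      simp [mul_comm]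
    rw [Finset.sum_congr rfl (fun g _ => inner g),
      sum_image_card n R (fun ℓ : ℕ => (ℓ : ℝ) * F ℓ + ((n - ℓ : ℕ) : ℝ) * F (ℓ + 1))]
    have key : ∀ ℓ ∈ Finset.range (R+1),
        (n.choose ℓ * ℓ.factorial * stirling2 R ℓ : ℝ) *
          ((fun ℓ : ℕ => (ℓ : ℝ) * F ℓ + ((n - ℓ : ℕ) : ℝ) * F (ℓ + 1)) ℓ)
        = (n.choose ℓ * ℓ.factorial * stirling2 R ℓ : ℝ) * ℓ * F ℓ
          + (n.choose (ℓ+1) * (ℓ+1).factorial * stirling2 R ℓ : ℝ) * F (ℓ+1) := by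
      intro ℓ _
      have hc : ((n.choose (ℓ+1) * (ℓ+1) : ℕ) : ℝ) = ((n.choose ℓ * (n - ℓ) : ℕ) : ℝ) := by
        rw [Nat.choose_succ_right_eq n ℓ]
      push_cast at hc ⊢
      rw [Nat.factorial_succ]
      push_cast
      linear_combination (-(ℓ.factorial : ℝ) * (stirling2 R ℓ : ℝ) * F (ℓ+1)) * hc
    rw [Finset.sum_congr rfl key, Finset.sum_add_distrib]
    have hT1 : (∑ ℓ ∈ Finset.range (R+1),
          (n.choose ℓ * ℓ.factorial * stirling2 R ℓ : ℝ) * ℓ * F ℓ)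
        = ∑ ℓ ∈ Finset.range (R+1),
            (n.choose (ℓ+1) * (ℓ+1).factorial * ((ℓ+1) * stirling2 R (ℓ+1)) : ℝ) * F (ℓ+1) := by
      have e1 : (∑ ℓ ∈ Finset.range (R+2),
            (n.choose ℓ * ℓ.factorial * stirling2 R ℓ : ℝ) * ℓ * F ℓ)
          = ∑ ℓ ∈ Finset.range (R+1),
              (n.choose ℓ * ℓ.factorial * stirling2 R ℓ : ℝ) * ℓ * F ℓ := by
        rw [Finset.sum_range_succ, stirling2_eq_zero (by omega)]
        simp
      rw [← e1, Finset.sum_range_succ']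
      simp
      apply Finset.sum_congr rfl
      intro ℓ _
      push_cast
      ring
    rw [hT1, ← Finset.sum_add_distrib]
    rw [Finset.sum_range_succ' (fun ℓ =>
        (n.choose ℓ * ℓ.factorial * stirling2 (R+1) ℓ : ℝ) * F ℓ) (R+1)]
    have hz : stirling2 (R+1) 0 = 0 := rfl
    rw [hz]
    simp only [Nat.cast_zero, Nat.cast_mul, mul_zero, zero_mul, add_zero, Nat.cast_ofNat]
    apply Finset.sum_congr rfl
    intro ℓ _
    have hs : stirling2 (R+1) (ℓ+1) = (ℓ+1) * stirling2 R (ℓ+1) + stirling2 R ℓ := rfl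
    rw [hs]
    push_cast
    ring

lemma card_fiber {n k R : ℕ} (t : Finset (Fin n)) (ht : t.card = k) :
    (Finset.univ.filter (fun y : Fin R → Fin n => ∀ i, y i ∈ t)).card = k ^ R := by
  rw [← Fintype.card_subtype]
  rw [Fintype.card_congr
    (⟨fun y i => ⟨y.1 i, y.2 i⟩, fun f => ⟨fun i => (f i).1, fun i => (f i).2⟩,
      fun y => Subtype.ext (funext fun i => rfl), fun f => funext fun i => rfl⟩ :
      {y : Fin R → Fin n // ∀ i, y i ∈ t} ≃ (Fin R → t))]
  rw [Fintype.card_fun, Fintype.card_coe, ht, Fintype.card_fin]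

lemma card_supersets {n k : ℕ} (s : Finset (Fin n)) (hsk : s.card ≤ k) :
    (Finset.univ.filter
        (fun x : {x : Finset (Fin n) // x.card = k} => s ⊆ x.1)).card
      = (n - s.card).choose (k - s.card) := by
  classical
  have hcompl : sᶜ.card = n - s.card := by
    rw [Finset.card_compl, Fintype.card_fin]
  rw [← hcompl, ← Finset.card_powersetCard]
  refine Finset.card_bij' (fun x _ => x.1 \ s)
    (fun t ht => (⟨t ∪ s, by
      simp only [Finset.mem_powersetCard] at ht
      rw [Finset.card_union_of_disjoint, ht.2, Nat.sub_add_cancel hsk]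
      exact Finset.disjoint_left.2 fun a hat has => by
        have := ht.1 hat; simp only [Finset.mem_compl] at this; exact this has⟩ :
      {x : Finset (Fin n) // x.card = k})) ?hi ?hj ?li ?ri
  case hi =>
    intro x hx
    simp only [Finset.mem_filter, Finset.mem_univ, true_and] at hx
    simp only [Finset.mem_powersetCard]
    constructor
    · intro a ha
      simp only [Finset.mem_sdiff] at ha
      simp [ha.2]
    · rw [Finset.card_sdiff_of_subset hx, x.2]
  case hj =>
    intro t ht
    simp only [Finset.mem_filter, Finset.mem_univ, true_and]
    exact Finset.subset_union_right
  case li =>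
    intro x hx
    simp only [Finset.mem_filter, Finset.mem_univ, true_and] at hx
    exact Subtype.ext (Finset.sdiff_union_of_subset hx)
  case ri =>
    intro t ht
    simp only [Finset.mem_powersetCard] at ht
    show (t ∪ s) \ s = t
    rw [Finset.union_sdiff_right]
    exact Finset.sdiff_eq_self_of_disjoint (Finset.disjoint_left.2
      (fun a hat has => by
        have := ht.1 hat; simp only [Finset.mem_compl] at this; exact this has))

/-- Mutual information `I(X;Y)` of the Coupon Collector Channel `CC(n,k,R)` with uniform
input equals `log₂ C(n,k) - k^(-R) · Σ_ℓ C(k,ℓ)·S(R,ℓ)·ℓ!·log₂ C(n-ℓ,k-ℓ)`. -/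
theorem stmt6 (n k R : ℕ) (hk : 0 < k) (hkn : k < n) (hR : 0 < R)
    (joint : {x : Finset (Fin n) // x.card = k} → (Fin R → Fin n) → ℝ)
    (hjoint : ∀ x y, joint x y =
      (1 / (n.choose k : ℝ)) * (if ∀ i, y i ∈ x.1 then ((k : ℝ) ^ R)⁻¹ else 0)) :
    (∑ x : {x : Finset (Fin n) // x.card = k}, ∑ y : Fin R → Fin n,
        joint x y * Real.logb 2 (joint x y /
          ((∑ y' : Fin R → Fin n, joint x y') *
            ∑ x' : {x : Finset (Fin n) // x.card = k}, joint x' y)))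
      = Real.logb 2 (n.choose k) -
          ((k : ℝ) ^ R)⁻¹ *
            ∑ ℓ ∈ Finset.Icc 1 (min k R),
              (k.choose ℓ * stirling2 R ℓ * ℓ.factorial : ℝ) *
                Real.logb 2 (((n - ℓ).choose (k - ℓ) : ℝ)) := by
  classical
  have hkn' : k ≤ n := hkn.le
  have hCpos : (0:ℝ) < (n.choose k : ℝ) := by exact_mod_cast Nat.choose_pos hkn'
  have hkRpos : (0:ℝ) < (k:ℝ) ^ R := by positivity
  set C : ℝ := (n.choose k : ℝ) with hCdef
  set N : ℕ → ℝ := fun ℓ => ((n - ℓ).choose (k - ℓ) : ℝ) with hNdef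
  have hNpos : ∀ ℓ, ℓ ≤ k → (0:ℝ) < N ℓ := by
    intro ℓ hℓ
    have h1 : k - ℓ ≤ n - ℓ := by omega
    simp only [hNdef]
    exact_mod_cast Nat.choose_pos h1
  set F : ℕ → ℝ := fun ℓ => if ℓ ≤ k then
      N ℓ * (1/C * ((k:ℝ)^R)⁻¹ * (Real.logb 2 C - Real.logb 2 (N ℓ))) else 0 with hFdef
  set F0 : ℕ → ℝ := fun ℓ => if ℓ ≤ k then N ℓ else 0 with hF0def
  set G : ℕ → ℝ := fun ℓ => if ℓ ≤ k then N ℓ * Real.logb 2 (N ℓ) else 0 with hGdef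
  have margA : ∀ x : {x : Finset (Fin n) // x.card = k},
      (∑ y' : Fin R → Fin n, joint x y') = 1 / C := by
    intro x
    simp_rw [hjoint x]
    rw [← Finset.mul_sum, Finset.sum_ite, Finset.sum_const, Finset.sum_const_zero, add_zero,
      card_fiber x.1 x.2, nsmul_eq_mul]
    push_cast
    field_simp
  have hpred : ∀ y : Fin R → Fin n, ∀ x : {x : Finset (Fin n) // x.card = k},
      (∀ i, y i ∈ x.1) ↔ Finset.image y Finset.univ ⊆ x.1 := by
    intro y x
    simp [Finset.image_subset_iff]
  have hfilt : ∀ y : Fin R → Fin n,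
      (Finset.univ.filter (fun x : {x : Finset (Fin n) // x.card = k} => ∀ i, y i ∈ x.1))
        = Finset.univ.filter (fun x => Finset.image y Finset.univ ⊆ x.1) := by
    intro y
    exact Finset.filter_congr (fun x _ => hpred y x)
  have hnot : ∀ y : Fin R → Fin n, ¬ (Finset.image y Finset.univ).card ≤ k →
      ∀ x : {x : Finset (Fin n) // x.card = k}, ¬ (∀ i, y i ∈ x.1) := by
    intro y hy x hx
    have h1 : Finset.image y Finset.univ ⊆ x.1 := (hpred y x).1 hx
    have h2 := Finset.card_le_card h1
    rw [x.2] at h2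
    exact hy h2
  have margB : ∀ y : Fin R → Fin n,
      (Finset.image y Finset.univ).card ≤ k →
      (∑ x' : {x : Finset (Fin n) // x.card = k}, joint x' y)
        = 1 / C * ((k:ℝ)^R)⁻¹ * N ((Finset.image y Finset.univ).card) := by
    intro y hy
    simp_rw [hjoint]
    rw [← Finset.mul_sum, Finset.sum_ite, Finset.sum_const, Finset.sum_const_zero, add_zero,
      hfilt y, card_supersets _ hy, nsmul_eq_mul]
    simp only [hNdef]
    ring
  have inner2 : ∀ y : Fin R → Fin n,
      (∑ x : {x : Finset (Fin n) // x.card = k},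
        joint x y * Real.logb 2 (joint x y /
          ((∑ y' : Fin R → Fin n, joint x y') *
            ∑ x' : {x : Finset (Fin n) // x.card = k}, joint x' y)))
        = F ((Finset.image y Finset.univ).card) := by
    intro y
    by_cases hy : (Finset.image y Finset.univ).card ≤ k
    · have hterm : ∀ x : {x : Finset (Fin n) // x.card = k},
          joint x y * Real.logb 2 (joint x y /
            ((∑ y' : Fin R → Fin n, joint x y') *
              ∑ x' : {x : Finset (Fin n) // x.card = k}, joint x' y))
          = if (∀ i, y i ∈ x.1) then
              1/C * ((k:ℝ)^R)⁻¹ *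
                (Real.logb 2 C - Real.logb 2 (N ((Finset.image y Finset.univ).card)))
            else 0 := by
        intro x
        rw [margA x, margB y hy, hjoint x y]
        by_cases h : ∀ i, y i ∈ x.1
        · rw [if_pos h, if_pos h]
          have harg : (1/C * ((k:ℝ)^R)⁻¹) /
              ((1/C) * (1/C * ((k:ℝ)^R)⁻¹ * N ((Finset.image y Finset.univ).card)))
              = C / N ((Finset.image y Finset.univ).card) := by
            have := (hNpos _ hy).ne'
            field_simp
          rw [harg, Real.logb_div hCpos.ne' (hNpos _ hy).ne']
        · rw [if_neg h, if_neg h]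
          ring
      rw [Finset.sum_congr rfl (fun x _ => hterm x), Finset.sum_ite, Finset.sum_const,
        Finset.sum_const_zero, add_zero, hfilt y, card_supersets _ hy, nsmul_eq_mul]
      simp only [hFdef, hNdef, if_pos hy]
    · have hz : ∀ x : {x : Finset (Fin n) // x.card = k},
          joint x y * Real.logb 2 (joint x y /
            ((∑ y' : Fin R → Fin n, joint x y') *
              ∑ x' : {x : Finset (Fin n) // x.card = k}, joint x' y)) = 0 := by
        intro x
        rw [hjoint x y, if_neg (hnot y hy x)]
        ring
      rw [Finset.sum_congr rfl (fun x _ => hz x)]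
      simp only [hFdef, if_neg hy, Finset.sum_const_zero]
  have inner0 : ∀ y : Fin R → Fin n,
      (∑ x : {x : Finset (Fin n) // x.card = k}, if (∀ i, y i ∈ x.1) then (1:ℝ) else 0)
        = F0 ((Finset.image y Finset.univ).card) := by
    intro y
    rw [Finset.sum_ite, Finset.sum_const, Finset.sum_const_zero, add_zero, nsmul_eq_mul, mul_one]
    by_cases hy : (Finset.image y Finset.univ).card ≤ k
    · rw [hfilt y, card_supersets _ hy]
      simp only [hF0def, hNdef, if_pos hy]
    · have he : (Finset.univ.filter
          (fun x : {x : Finset (Fin n) // x.card = k} => ∀ i, y i ∈ x.1)) = ∅ := by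
        apply Finset.filter_false_of_mem
        intro x _
        exact hnot y hy x
      rw [he]
      simp only [hF0def, if_neg hy, Finset.card_empty, Nat.cast_zero]
  have sumF0 : (∑ ℓ ∈ Finset.range (R+1),
      (n.choose ℓ * ℓ.factorial * stirling2 R ℓ : ℝ) * F0 ℓ) = C * (k:ℝ)^R := by
    rw [← sum_image_card n R F0,
      Finset.sum_congr rfl (fun y (_ : y ∈ Finset.univ) => (inner0 y).symm),
      Finset.sum_comm]
    have hx : ∀ x : {x : Finset (Fin n) // x.card = k},
        (∑ y : Fin R → Fin n, if (∀ i, y i ∈ x.1) then (1:ℝ) else 0) = (k:ℝ)^R := by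
      intro x
      rw [Finset.sum_ite, Finset.sum_const, Finset.sum_const_zero, add_zero,
        card_fiber x.1 x.2, nsmul_eq_mul, mul_one]
      push_cast
      ring
    rw [Finset.sum_congr rfl (fun x _ => hx x), Finset.sum_const, nsmul_eq_mul,
      Finset.card_univ]
    have hcard : ((Fintype.card {x : Finset (Fin n) // x.card = k} : ℕ) : ℝ) = C := by
      rw [Fintype.card_finset_len, Fintype.card_fin]
    rw [hcard]
  -- main computation
  rw [Finset.sum_comm, Finset.sum_congr rfl (fun y (_ : y ∈ Finset.univ) => inner2 y),
    sum_image_card n R F]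
  have hsplit : ∀ ℓ ∈ Finset.range (R+1),
      (n.choose ℓ * ℓ.factorial * stirling2 R ℓ : ℝ) * F ℓ
        = (1/C * ((k:ℝ)^R)⁻¹ * Real.logb 2 C) *
            ((n.choose ℓ * ℓ.factorial * stirling2 R ℓ : ℝ) * F0 ℓ)
          - (1/C * ((k:ℝ)^R)⁻¹) *
            ((n.choose ℓ * ℓ.factorial * stirling2 R ℓ : ℝ) * G ℓ) := by
    intro ℓ _
    simp only [hFdef, hF0def, hGdef]
    by_cases hℓ : ℓ ≤ k
    · rw [if_pos hℓ, if_pos hℓ, if_pos hℓ]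
      ring
    · rw [if_neg hℓ, if_neg hℓ, if_neg hℓ]
      ring
  rw [Finset.sum_congr rfl hsplit, Finset.sum_sub_distrib, ← Finset.mul_sum, ← Finset.mul_sum,
    sumF0]
  have hG : (∑ ℓ ∈ Finset.range (R+1),
      (n.choose ℓ * ℓ.factorial * stirling2 R ℓ : ℝ) * G ℓ)
      = C * ∑ ℓ ∈ Finset.Icc 1 (min k R),
          (k.choose ℓ * stirling2 R ℓ * ℓ.factorial : ℝ) *
            Real.logb 2 (((n - ℓ).choose (k - ℓ) : ℝ)) := by
    have hsub : Finset.Icc 1 (min k R) ⊆ Finset.range (R+1) := by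
      intro ℓ hℓ
      simp only [Finset.mem_Icc] at hℓ
      simp only [Finset.mem_range]
      omega
    have hvan : ∀ ℓ ∈ Finset.range (R+1), ℓ ∉ Finset.Icc 1 (min k R) →
        (n.choose ℓ * ℓ.factorial * stirling2 R ℓ : ℝ) * G ℓ = 0 := by
      intro ℓ hℓ hℓ'
      simp only [Finset.mem_range] at hℓ
      simp only [Finset.mem_Icc, not_and, not_le] at hℓ'
      rcases Nat.eq_zero_or_pos ℓ with h0 | h0
      · subst h0
        rw [stirling2_zero_right hR]
        push_cast
        ring
      · have hk' : k < ℓ := by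
          have := hℓ' h0
          omega
        simp only [hGdef, if_neg (by omega : ¬ ℓ ≤ k)]
        ring
    rw [← Finset.sum_subset hsub hvan, Finset.mul_sum]
    apply Finset.sum_congr rfl
    intro ℓ hℓ
    simp only [Finset.mem_Icc] at hℓ
    have hℓk : ℓ ≤ k := le_trans hℓ.2 (min_le_left _ _)
    simp only [hGdef, hNdef, if_pos hℓk]
    have hcm : ((n.choose k * k.choose ℓ : ℕ) : ℝ)
        = ((n.choose ℓ * (n - ℓ).choose (k - ℓ) : ℕ) : ℝ) := by
      rw [Nat.choose_mul hℓk]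
    push_cast at hcm
    push_cast
    linear_combination (-(ℓ.factorial : ℝ) * (stirling2 R ℓ : ℝ) *
      Real.logb 2 (((n - ℓ).choose (k - ℓ) : ℝ))) * hcm
  rw [hG]
  have hCne : C ≠ 0 := hCpos.ne'
  have hkRne : ((k:ℝ)^R) ≠ 0 := hkRpos.ne'
  field_simp
end

section
/- For all n, k, R with 0 < k < n and R ≥ 1, the capacity of the Coupon Collector Channel is at least that of its erasure version: log₂ C(n,k) − k^{-R} Σ_{ℓ=1}^{min(k,R)} C(k,ℓ) S(R,ℓ) ℓ! log₂ C(n-ℓ,k-ℓ) ≥ log₂ C(n,k) · S(R,k) · k! · k^{-R}. -/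
lemma stirling2_eq_zero_of_lt : ∀ {R k : ℕ}, R < k → stirling2 R k = 0 := by
  intro R
  induction R with
  | zero =>
    intro k hk
    match k, hk with
    | k+1, _ => rfl
  | succ n ih =>
    intro k hk
    match k, hk with
    | k+1, hk =>
      show (k+1) * stirling2 n (k+1) + stirling2 n k = 0
      rw [ih (by omega), ih (by omega)]; simp

lemma stirling2_sum (k : ℕ) : ∀ R : ℕ,
    ∑ ℓ ∈ Finset.range (R+1), k.choose ℓ * stirling2 R ℓ * ℓ.factorial = k ^ R := by
  intro R
  induction R with
  | zero => simp [stirling2]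
  | succ R ih =>
    rw [Finset.sum_range_succ']
    have h0 : k.choose 0 * stirling2 (R+1) 0 * Nat.factorial 0 = 0 := by
      simp [stirling2]
    rw [h0, add_zero]
    have hsplit : ∀ ℓ ∈ Finset.range (R+1),
        k.choose (ℓ+1) * stirling2 (R+1) (ℓ+1) * (ℓ+1).factorial
          = (k.choose (ℓ+1) * (ℓ+1) * stirling2 R (ℓ+1) * (ℓ+1).factorial)
            + k.choose ℓ * (k - ℓ) * stirling2 R ℓ * ℓ.factorial := by
      intro ℓ _
      have hst : stirling2 (R+1) (ℓ+1) = (ℓ+1) * stirling2 R (ℓ+1) + stirling2 R ℓ := rfl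
      have hc : k.choose (ℓ+1) * (ℓ+1) = k.choose ℓ * (k - ℓ) := Nat.choose_succ_right_eq k ℓ
      rw [hst]
      have hf : (ℓ+1).factorial = (ℓ+1) * ℓ.factorial := rfl
      calc k.choose (ℓ+1) * ((ℓ+1) * stirling2 R (ℓ+1) + stirling2 R ℓ) * (ℓ+1).factorial
          = k.choose (ℓ+1) * (ℓ+1) * stirling2 R (ℓ+1) * (ℓ+1).factorial
            + (k.choose (ℓ+1) * (ℓ+1)) * stirling2 R ℓ * ℓ.factorial := by
            rw [hf]; ring
        _ = _ := by rw [hc]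
    rw [Finset.sum_congr rfl hsplit, Finset.sum_add_distrib]
    have hg : ∑ ℓ ∈ Finset.range (R+1), k.choose (ℓ+1) * (ℓ+1) * stirling2 R (ℓ+1) * (ℓ+1).factorial
        = ∑ ℓ ∈ Finset.range (R+1), k.choose ℓ * ℓ * stirling2 R ℓ * ℓ.factorial := by
      have := Finset.sum_range_succ' (fun j => k.choose j * j * stirling2 R j * j.factorial) (R+1)
      rw [Finset.sum_range_succ] at this
      simp [stirling2_eq_zero_of_lt (Nat.lt_succ_self R)] at this
      rw [this]
    rw [hg, ← Finset.sum_add_distrib]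
    have hcomb : ∀ ℓ ∈ Finset.range (R+1),
        k.choose ℓ * ℓ * stirling2 R ℓ * ℓ.factorial + k.choose ℓ * (k - ℓ) * stirling2 R ℓ * ℓ.factorial
          = k * (k.choose ℓ * stirling2 R ℓ * ℓ.factorial) := by
      intro ℓ _
      rcases le_or_gt ℓ k with h | h
      · have h1 : k.choose ℓ * ℓ * stirling2 R ℓ * ℓ.factorial + k.choose ℓ * (k - ℓ) * stirling2 R ℓ * ℓ.factorial
            = (ℓ + (k - ℓ)) * (k.choose ℓ * stirling2 R ℓ * ℓ.factorial) := by ring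
        rw [h1, Nat.add_sub_cancel' h]
      · simp [Nat.choose_eq_zero_of_lt h]
    rw [Finset.sum_congr rfl hcomb, ← Finset.mul_sum, ih, pow_succ]
    ring

lemma choose_sub_le : ∀ (ℓ : ℕ) {n k : ℕ}, ℓ ≤ k → k ≤ n → (n - ℓ).choose (k - ℓ) ≤ n.choose k := by
  intro ℓ
  induction ℓ with
  | zero => intro n k _ _; simp
  | succ ℓ ih =>
    intro n k h1 h2
    have hk1 : 1 ≤ k := by omega
    obtain ⟨k', rfl⟩ : ∃ k', k = k' + 1 := ⟨k - 1, by omega⟩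
    obtain ⟨n', rfl⟩ : ∃ n', n = n' + 1 := ⟨n - 1, by omega⟩
    have : (n' + 1 - (ℓ+1)).choose (k' + 1 - (ℓ+1)) = (n' - ℓ).choose (k' - ℓ) := by
      congr 1 <;> omega
    rw [this]
    calc (n' - ℓ).choose (k' - ℓ) ≤ n'.choose k' := ih (by omega) (by omega)
      _ ≤ (n'+1).choose (k'+1) := by rw [Nat.choose_succ_succ]; omega

lemma sum_Icc_eq (R k : ℕ) (hR : 1 ≤ R) (hk : 1 ≤ k) :
    ∑ ℓ ∈ Finset.Icc 1 (min k R), k.choose ℓ * stirling2 R ℓ * ℓ.factorial = k ^ R := by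
  rw [← stirling2_sum k R]
  apply Finset.sum_subset
  · intro ℓ hℓ
    simp only [Finset.mem_Icc, Finset.mem_range] at *
    omega
  · intro ℓ hℓ1 hℓ2
    simp only [Finset.mem_Icc, Finset.mem_range] at *
    rcases Nat.eq_zero_or_pos ℓ with h | h
    · subst h
      obtain ⟨R', rfl⟩ : ∃ R', R = R' + 1 := ⟨R - 1, by omega⟩
      simp [stirling2]
    · have : k < ℓ := by omega
      simp [Nat.choose_eq_zero_of_lt this]

lemma sum_erase_eq (R k : ℕ) (hR : 1 ≤ R) (hk : 1 ≤ k) :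
    (∑ ℓ ∈ (Finset.Icc 1 (min k R)).erase k, k.choose ℓ * stirling2 R ℓ * ℓ.factorial)
      + stirling2 R k * k.factorial = k ^ R := by
  rcases le_or_gt k R with h | h
  · have hmem : k ∈ Finset.Icc 1 (min k R) := by simp [Finset.mem_Icc]; omega
    have := Finset.sum_erase_add (Finset.Icc 1 (min k R))
      (fun ℓ => k.choose ℓ * stirling2 R ℓ * ℓ.factorial) hmem
    simp only [Nat.choose_self, one_mul] at this
    rw [this, sum_Icc_eq R k hR hk]
  · have hnm : k ∉ Finset.Icc 1 (min k R) := by simp [Finset.mem_Icc]; omega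
    rw [Finset.erase_eq_of_notMem hnm, stirling2_eq_zero_of_lt h, zero_mul, add_zero,
      sum_Icc_eq R k hR hk]

/-- The capacity of the Coupon Collector Channel is at least that of its erasure version. -/
theorem stmt10 (n k R : ℕ) (hk : 0 < k) (hkn : k < n) (hR : 1 ≤ R) :
    Real.logb 2 (n.choose k) -
        ((k : ℝ) ^ R)⁻¹ *
          ∑ ℓ ∈ Finset.Icc 1 (min k R),
            (k.choose ℓ * stirling2 R ℓ * ℓ.factorial : ℝ) *
              Real.logb 2 (((n - ℓ).choose (k - ℓ) : ℝ))
      ≥ Real.logb 2 (n.choose k) * ((stirling2 R k : ℝ) * (k.factorial : ℝ) * ((k : ℝ) ^ R)⁻¹) := by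
  have hn1 : 1 ≤ n.choose k := Nat.choose_pos hkn.le
  set L : ℝ := Real.logb 2 (n.choose k) with hLdef
  have hL : 0 ≤ L := Real.logb_nonneg one_lt_two (by exact_mod_cast hn1)
  have hP : (0:ℝ) < (k:ℝ)^R := pow_pos (by exact_mod_cast hk) R
  set m := min k R with hm
  set N : ℕ := ∑ ℓ ∈ (Finset.Icc 1 m).erase k, k.choose ℓ * stirling2 R ℓ * ℓ.factorial with hN
  have hNP : (N:ℝ) + (stirling2 R k : ℝ) * (k.factorial : ℝ) = (k:ℝ)^R := by
    exact_mod_cast congrArg (Nat.cast : ℕ → ℝ) (sum_erase_eq R k hR hk)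
  -- bound the sum
  have hsum : (∑ ℓ ∈ Finset.Icc 1 m,
      (k.choose ℓ * stirling2 R ℓ * ℓ.factorial : ℝ) * Real.logb 2 (((n - ℓ).choose (k - ℓ) : ℝ)))
      ≤ L * (N:ℝ) := by
    have step1 : (∑ ℓ ∈ Finset.Icc 1 m,
        (k.choose ℓ * stirling2 R ℓ * ℓ.factorial : ℝ) * Real.logb 2 (((n - ℓ).choose (k - ℓ) : ℝ)))
        ≤ ∑ ℓ ∈ Finset.Icc 1 m,
          (if ℓ = k then 0 else (k.choose ℓ * stirling2 R ℓ * ℓ.factorial : ℝ) * L) := by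
      apply Finset.sum_le_sum
      intro ℓ hℓ
      simp only [Finset.mem_Icc] at hℓ
      by_cases hek : ℓ = k
      · subst hek
        simp [Nat.sub_self]
      · rw [if_neg hek]
        have hlk : ℓ ≤ k := le_trans hℓ.2 (min_le_left k R)
        have h1 : (1:ℝ) ≤ ((n - ℓ).choose (k - ℓ) : ℝ) := by
          exact_mod_cast Nat.choose_pos (by omega)
        have h2 : ((n - ℓ).choose (k - ℓ) : ℝ) ≤ (n.choose k : ℝ) := by
          exact_mod_cast choose_sub_le ℓ hlk hkn.le
        have h3 : Real.logb 2 (((n - ℓ).choose (k - ℓ) : ℝ)) ≤ L := by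
          exact Real.logb_le_logb_of_le one_lt_two (by linarith) h2
        apply mul_le_mul_of_nonneg_left h3
        positivity
    have step2 : (∑ ℓ ∈ Finset.Icc 1 m,
        (if ℓ = k then 0 else (k.choose ℓ * stirling2 R ℓ * ℓ.factorial : ℝ) * L)) = L * (N:ℝ) := by
      have hz : (fun ℓ => if ℓ = k then (0:ℝ)
          else (k.choose ℓ * stirling2 R ℓ * ℓ.factorial : ℝ) * L) k = 0 := by simp
      rw [← Finset.sum_erase (Finset.Icc 1 m) hz]
      have : ∀ ℓ ∈ (Finset.Icc 1 m).erase k,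
          (if ℓ = k then 0 else (k.choose ℓ * stirling2 R ℓ * ℓ.factorial : ℝ) * L)
            = (k.choose ℓ * stirling2 R ℓ * ℓ.factorial : ℝ) * L := by
        intro ℓ hℓ
        rw [if_neg (Finset.ne_of_mem_erase hℓ)]
      rw [Finset.sum_congr rfl this, ← Finset.sum_mul, hN]
      push_cast
      ring
    linarith
  have hmul : ((k:ℝ)^R)⁻¹ * (∑ ℓ ∈ Finset.Icc 1 m,
      (k.choose ℓ * stirling2 R ℓ * ℓ.factorial : ℝ) * Real.logb 2 (((n - ℓ).choose (k - ℓ) : ℝ)))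
      ≤ ((k:ℝ)^R)⁻¹ * (L * (N:ℝ)) :=
    mul_le_mul_of_nonneg_left hsum (inv_nonneg.mpr hP.le)
  have heq : L - ((k:ℝ)^R)⁻¹ * (L * (N:ℝ))
      = L * ((stirling2 R k : ℝ) * (k.factorial : ℝ) * ((k:ℝ)^R)⁻¹) := by
    field_simp
    linear_combination (-L) * hNP
  linarith
end
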